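/- X²₁ (the set of points Σ δₙ ∏_{j≤n} ηⱼ over signed revolving sequences with first nonzero digit 1) is a closed subset of ℂ. -/

import Mathlib

open Complex

/-- e^{iθ} -/
noncomputable def rot (θ : ℝ) : ℂ := Complex.exp (θ * Complex.I)

/-- The digit set Δ_θ = {0, 1, e^{iθ}, …, e^{(p-1)iθ}}. -/
def Delta (θ : ℝ) (p : ℕ) : Set ℂ := insert 0 {z | ∃ k, k < p ∧ z = rot θ ^ k}

/-- Signed Revolving Condition: each nonzero digit equals e^{+iθ} times the previous
nonzero digit if its position j₀ is odd, and e^{-iθ} times it if j₀ is even.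
Sequences are indexed from 1; index 0 is a dummy (digit 0). -/
def SRC (θ : ℝ) (δ : ℕ → ℂ) : Prop :=
  ∀ j k : ℕ, j < k → δ j ≠ 0 → δ k ≠ 0 → (∀ m, j < m → m < k → δ m = 0) →
    δ k = (if Odd j then rot θ else (rot θ)⁻¹) * δ j

/-- Membership in W^±_θ (with the convention δ 0 = 0, i.e. sequences start at index 1). -/
def Wsigned (θ : ℝ) (p : ℕ) (δ : ℕ → ℂ) : Prop :=
  δ 0 = 0 ∧ (∀ n, δ n ∈ Delta θ p) ∧ SRC θ δ

/-- The first nonzero digit of δ is c (or δ is identically zero). -/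
def FirstNonzero (δ : ℕ → ℂ) (c : ℂ) : Prop :=
  (∀ n, δ n = 0) ∨ ∃ j, δ j = c ∧ ∀ m, m < j → δ m = 0

/-- η_j = α for odd j, conj α for even j. -/
noncomputable def eta (α : ℂ) (j : ℕ) : ℂ := if Odd j then α else starRingEnd ℂ α

/-- X²₁ : points from signed revolving sequences with first nonzero digit 1. -/
noncomputable def X2one (α : ℂ) (θ : ℝ) (p : ℕ) : Set ℂ :=
  {x | ∃ δ : ℕ → ℂ, Wsigned θ p δ ∧ FirstNonzero δ 1 ∧
    x = ∑' n, δ n * ∏ j ∈ Finset.Icc 1 n, eta α j}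

/-- X²_{α,θ} : points from all signed revolving sequences. -/
noncomputable def X2full (α : ℂ) (θ : ℝ) (p : ℕ) : Set ℂ :=
  {x | ∃ δ : ℕ → ℂ, Wsigned θ p δ ∧
    x = ∑' n, δ n * ∏ j ∈ Finset.Icc 1 n, eta α j}

lemma rot_norm (θ : ℝ) : ‖rot θ‖ = 1 := by
  simp [rot, Complex.norm_exp_ofReal_mul_I]

lemma Delta_finite (θ : ℝ) (p : ℕ) : (Delta θ p).Finite := by
  have : Delta θ p = insert 0 ((fun k => rot θ ^ k) '' Set.Iio p) := by
    ext z; simp [Delta, Set.mem_image, eq_comm]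
  rw [this]
  exact ((Set.finite_Iio p).image _).insert 0

lemma Delta_norm_le {θ : ℝ} {p : ℕ} {z : ℂ} (hz : z ∈ Delta θ p) : ‖z‖ ≤ 1 := by
  rcases hz with h | ⟨k, _, rfl⟩
  · simp [h]
  · rw [norm_pow, rot_norm, one_pow]

/-- The set of admissible digit sequences. -/
def Seqs (θ : ℝ) (p : ℕ) : Set (ℕ → ℂ) :=
  {δ | Wsigned θ p δ ∧ FirstNonzero δ 1}

/-- Any point in the closure of `Seqs` can be matched on any finite initial segment. -/
lemma closure_approx {θ : ℝ} {p : ℕ} {δ : ℕ → ℂ} (hδ : δ ∈ closure (Seqs θ p)) (N : ℕ) :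
    ∃ δ' ∈ Seqs θ p, ∀ m ≤ N, δ' m = δ m := by
  set V : Set (ℕ → ℂ) :=
    ⋂ m ∈ Finset.range (N + 1), (fun δ' : ℕ → ℂ => δ' m) ⁻¹' (Delta θ p \ {δ m})ᶜ with hV
  have hVopen : IsOpen V := by
    refine isOpen_biInter_finset fun m _ => ?_
    exact (((Delta_finite θ p).subset (Set.diff_subset)).isClosed.isOpen_compl).preimage
      (continuous_apply m)
  have hδV : δ ∈ V := by
    refine Set.mem_iInter₂.2 fun m _ => ?_
    intro h
    exact h.2 rfl
  rcases mem_closure_iff.1 hδ V hVopen hδV with ⟨δ', hδ'V, hδ'S⟩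
  refine ⟨δ', hδ'S, fun m hm => ?_⟩
  have h1 : δ' m ∈ Delta θ p := hδ'S.1.2.1 m
  have h2 : δ' m ∉ Delta θ p \ {δ m} :=
    Set.mem_iInter₂.1 hδ'V m (Finset.mem_range.2 (Nat.lt_succ_of_le hm))
  by_contra hne
  exact h2 ⟨h1, hne⟩

lemma Seqs_isClosed (θ : ℝ) (p : ℕ) : IsClosed (Seqs θ p) := by
  rw [← closure_subset_iff_isClosed]
  intro δ hδ
  have happrox := fun N => closure_approx hδ N
  have hmem : ∀ n, δ n ∈ Delta θ p := by
    intro n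
    obtain ⟨δ', hδ'S, hagree⟩ := happrox n
    rw [← hagree n le_rfl]
    exact hδ'S.1.2.1 n
  have hzero : δ 0 = 0 := by
    obtain ⟨δ', hδ'S, hagree⟩ := happrox 0
    rw [← hagree 0 le_rfl]; exact hδ'S.1.1
  have hsrc : SRC θ δ := by
    intro j k hjk hj hk hmid
    obtain ⟨δ', hδ'S, hagree⟩ := happrox k
    have hj' : δ' j = δ j := hagree j (le_of_lt hjk)
    have hk' : δ' k = δ k := hagree k le_rfl
    have := hδ'S.1.2.2 j k hjk (by rw [hj']; exact hj) (by rw [hk']; exact hk)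
      (fun m hm1 hm2 => by rw [hagree m (le_of_lt hm2)]; exact hmid m hm1 hm2)
    rw [hj', hk'] at this
    exact this
  have hfirst : FirstNonzero δ 1 := by
    by_cases hall : ∀ n, δ n = 0
    · exact Or.inl hall
    · push_neg at hall
      have hex : ∃ n, δ n ≠ 0 := hall
      set j := Nat.find hex with hj
      have hjne : δ j ≠ 0 := Nat.find_spec hex
      have hjmin : ∀ m, m < j → δ m = 0 := fun m hm => by
        by_contra h; exact Nat.find_min hex hm h
      obtain ⟨δ', hδ'S, hagree⟩ := happrox j
      rcases hδ'S.2 with hall' | ⟨j', hj'1, hj'min⟩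
      · exact absurd (by rw [← hagree j le_rfl]; exact hall' j) hjne
      · refine Or.inr ⟨j, ?_, hjmin⟩
        rcases lt_trichotomy j' j with h | h | h
        · exact absurd (by rw [← hagree j' (le_of_lt h), hj'1]; norm_num :
            δ j' ≠ 0) (fun _ => by
              have := hjmin j' h
              rw [← hagree j' (le_of_lt h)] at this
              rw [hj'1] at this; norm_num at this)
        · rw [← hagree j le_rfl, ← h, hj'1]
        · exact absurd (by rw [← hagree j le_rfl]; exact hj'min j h) hjne
  exact ⟨⟨hzero, hmem, hsrc⟩, hfirst⟩

lemma Seqs_isCompact (θ : ℝ) (p : ℕ) : IsCompact (Seqs θ p) := by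
  have hK : IsCompact (Set.pi Set.univ fun _ : ℕ => Delta θ p) :=
    isCompact_univ_pi fun _ => (Delta_finite θ p).isCompact
  exact hK.of_isClosed_subset (Seqs_isClosed θ p)
    (fun δ hδ => Set.mem_univ_pi.2 fun n => hδ.1.2.1 n)


/-- X²₁ is a closed subset of ℂ. -/
theorem X2one_isClosed (α : ℂ) (θ : ℝ) (p : ℕ) (q : ℤ) (hp : 0 < p)
    (hθ : θ = 2 * Real.pi * (q : ℝ) / (p : ℝ)) (hα : ‖α‖ < 1) :
    IsClosed (X2one α θ p) := by
  set F : (ℕ → ℂ) → ℂ := fun δ => ∑' n, δ n * ∏ j ∈ Finset.Icc 1 n, eta α j with hF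
  have hw : ∀ n : ℕ, ‖∏ j ∈ Finset.Icc 1 n, eta α j‖ = ‖α‖ ^ n := by
    intro n
    rw [norm_prod]
    have : ∀ j ∈ Finset.Icc 1 n, ‖eta α j‖ = ‖α‖ := by
      intro j _
      unfold _root_.eta; split_ifs <;> simp
    rw [Finset.prod_congr rfl this, Finset.prod_const, Nat.card_Icc]
    simp
  have hcontOn : ContinuousOn F (Seqs θ p) := by
    rw [continuousOn_iff_continuous_restrict]
    have : (Set.domRestrict (Seqs θ p) F) =
        fun δ : Seqs θ p => ∑' n, (δ : ℕ → ℂ) n * ∏ j ∈ Finset.Icc 1 n, eta α j := rfl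
    rw [this]
    apply continuous_tsum (u := fun n => ‖α‖ ^ n)
    · intro n
      exact ((continuous_apply n).comp continuous_subtype_val).mul continuous_const
    · exact summable_geometric_of_lt_one (norm_nonneg α) hα
    · intro n δ
      rw [norm_mul, hw n]
      have h1 : ‖(δ : ℕ → ℂ) n‖ ≤ 1 := Delta_norm_le (δ.2.1.2.1 n)
      calc ‖(δ : ℕ → ℂ) n‖ * ‖α‖ ^ n ≤ 1 * ‖α‖ ^ n := by
            apply mul_le_mul_of_nonneg_right h1 (by positivity)
        _ = ‖α‖ ^ n := one_mul _
  have himg : X2one α θ p = F '' Seqs θ p := by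
    ext x
    constructor
    · rintro ⟨δ, h1, h2, rfl⟩; exact ⟨δ, ⟨h1, h2⟩, rfl⟩
    · rintro ⟨δ, ⟨h1, h2⟩, rfl⟩; exact ⟨δ, h1, h2, rfl⟩
  rw [himg]
  exact (((Seqs_isCompact θ p).image_of_continuousOn hcontOn)).isClosed
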